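/- Let P be a partially ordered set, x ∈ P, and (x_n) a sequence in P. Then (x_n) converges to x with respect to the sequential order topology τ_os(P) if and only if every subsequence of (x_n) has a further subsequence that order converges to x. -/

import Mathlib

open Filter Set


/-- A net `x`, indexed by a set with relation `r`, *order converges* to `l` in a poset if it is
squeezed between an increasing net with supremum `l` and a decreasing net with infimum `l`. -/
def OrderConvNet {ι P : Type*} (r : ι → ι → Prop) [Preorder P] (x : ι → P) (l : P) : Prop :=
  ∃ y z : ι → P,
    (∀ i j, r i j → y i ≤ y j) ∧ (∀ i j, r i j → z j ≤ z i) ∧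
    (∀ i, y i ≤ x i ∧ x i ≤ z i) ∧
    IsLUB (Set.range y) l ∧ IsGLB (Set.range z) l

/-- Order convergence of a sequence in a poset. -/
def SeqOrderConv {P : Type*} [Preorder P] (x : ℕ → P) (l : P) : Prop :=
  OrderConvNet (· ≤ · : ℕ → ℕ → Prop) x l

/-- The sequential order topology `τ_os(P)`: the finest topology on `P` such that every order
convergent sequence converges topologically to its order limit.  Its closed sets are exactly the
sequentially order closed sets. -/
def seqOrderTop (P : Type*) [Preorder P] : TopologicalSpace P :=
  sInf {t : TopologicalSpace P | ∀ (x : ℕ → P) (l : P), SeqOrderConv x l →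
    Filter.Tendsto x Filter.atTop (@nhds P t l)}

section Aux
variable {P : Type*} [Preorder P] {s t : ℕ → P} {q l b : P}

lemma SeqOrderConv.subseq (h : SeqOrderConv s q) {φ : ℕ → ℕ} (hφ : StrictMono φ) :
    SeqOrderConv (s ∘ φ) q := by
  obtain ⟨y, z, hy, hz, hyz, hLU, hGL⟩ := h
  refine ⟨y ∘ φ, z ∘ φ, fun i j hij => hy _ _ (hφ.monotone hij),
    fun i j hij => hz _ _ (hφ.monotone hij), fun i => hyz (φ i), ?_, ?_⟩
  · constructor
    · rintro _ ⟨i, rfl⟩; exact hLU.1 ⟨φ i, rfl⟩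
    · intro c hc
      refine hLU.2 ?_
      rintro _ ⟨i, rfl⟩
      exact le_trans (hy i (φ i) (hφ.le_apply)) (hc ⟨i, rfl⟩)
  · constructor
    · rintro _ ⟨i, rfl⟩; exact hGL.1 ⟨φ i, rfl⟩
    · intro c hc
      refine hGL.2 ?_
      rintro _ ⟨i, rfl⟩
      exact le_trans (hc ⟨i, rfl⟩) (hz i (φ i) (hφ.le_apply))

lemma SeqOrderConv.between (h : SeqOrderConv s q) (hst : ∀ n, s n ≤ t n ∧ t n ≤ s n) :
    SeqOrderConv t q := by
  obtain ⟨y, z, hy, hz, hyz, hLU, hGL⟩ := h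
  exact ⟨y, z, hy, hz, fun i => ⟨le_trans (hyz i).1 (hst i).1,
    le_trans (hst i).2 (hyz i).2⟩, hLU, hGL⟩

lemma SeqOrderConv.le_of_forall_le (h : SeqOrderConv s q) (hb : ∀ n, s n ≤ b) : q ≤ b := by
  obtain ⟨y, z, hy, hz, hyz, hLU, hGL⟩ := h
  refine hLU.2 ?_
  rintro _ ⟨i, rfl⟩
  exact le_trans (hyz i).1 (hb i)

lemma SeqOrderConv.ge_of_forall_ge (h : SeqOrderConv s q) (hb : ∀ n, b ≤ s n) : b ≤ q := by
  obtain ⟨y, z, hy, hz, hyz, hLU, hGL⟩ := h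
  refine hGL.2 ?_
  rintro _ ⟨i, rfl⟩
  exact le_trans (hb i) (hyz i).2

lemma SeqOrderConv.swap (h : SeqOrderConv s q) (h1 : q ≤ l) (h2 : l ≤ q) :
    SeqOrderConv s l := by
  obtain ⟨y, z, hy, hz, hyz, hLU, hGL⟩ := h
  refine ⟨y, z, hy, hz, hyz, ⟨?_, ?_⟩, ⟨?_, ?_⟩⟩
  · rintro _ ⟨i, rfl⟩; exact le_trans (hLU.1 ⟨i, rfl⟩) h1
  · intro c hc; exact le_trans h2 (hLU.2 hc)
  · rintro _ ⟨i, rfl⟩; exact le_trans h2 (hGL.1 ⟨i, rfl⟩)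
  · intro c hc; exact le_trans (hGL.2 hc) h1

lemma seqOrderConv_of_equiv (h : ∀ n, s n ≤ l ∧ l ≤ s n) : SeqOrderConv s l := by
  refine ⟨s, s, ?_, ?_, fun i => ⟨le_refl _, le_refl _⟩, ⟨?_, ?_⟩, ⟨?_, ?_⟩⟩
  · intro i j _; exact le_trans (h i).1 (h j).2
  · intro i j _; exact le_trans (h j).1 (h i).2
  · rintro _ ⟨i, rfl⟩; exact (h i).1
  · intro c hc; exact le_trans (h 0).2 (hc ⟨0, rfl⟩)
  · rintro _ ⟨i, rfl⟩; exact (h i).2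
  · intro c hc; exact le_trans (hc ⟨0, rfl⟩) (h 0).1

/-- sequentially order closed -/
def SeqOC (F : Set P) : Prop :=
  ∀ (s : ℕ → P) (q : P), (∀ n, s n ∈ F) → SeqOrderConv s q → q ∈ F

end Aux

/-- the topology whose closed sets are the sequentially order closed sets -/
def t0 (P : Type*) [Preorder P] : TopologicalSpace P where
  IsOpen U := ∀ (s : ℕ → P) (q : P), SeqOrderConv s q → q ∈ U → ∀ᶠ n in Filter.atTop, s n ∈ U
  isOpen_univ := by intro s q _ _; filter_upwards with n; trivial
  isOpen_inter := by
    intro U V hU hV s q hsq hq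
    filter_upwards [hU s q hsq hq.1, hV s q hsq hq.2] with n h1 h2
    exact ⟨h1, h2⟩
  isOpen_sUnion := by
    rintro S hS s q hsq ⟨U, hU, hqU⟩
    filter_upwards [hS U hU s q hsq hqU] with n h
    exact ⟨U, hU, h⟩

section Main
variable {P : Type*} [Preorder P]

lemma isOpen_t0_compl {F : Set P} (hF : SeqOC F) : @IsOpen P (t0 P) Fᶜ := by
  show ∀ (s : ℕ → P) (q : P), SeqOrderConv s q → q ∈ Fᶜ → ∀ᶠ n in Filter.atTop, s n ∈ Fᶜ
  intro s q hsq hq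
  by_contra hev
  rw [Filter.not_eventually] at hev
  obtain ⟨σ, hσ, hσF⟩ := Filter.extraction_of_frequently_atTop
    (hev.mono (fun n hn => (not_not.mp hn : s n ∈ F)))
  exact hq (hF (s ∘ σ) q hσF (hsq.subseq hσ))

lemma seqOrderTop_eq (P : Type*) [Preorder P] : seqOrderTop P = t0 P := by
  refine le_antisymm (sInf_le ?_) (le_sInf ?_)
  · -- t0 belongs to the class
    intro s l hsl
    rw [Filter.tendsto_def]
    intro U hU
    rw [@mem_nhds_iff P (t0 P) l U] at hU
    obtain ⟨V, hVU, hV, hlV⟩ := hU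
    filter_upwards [hV s l hsl hlV] with n h
    exact hVU h
  · -- t0 is finer than every member of the class
    intro t ht
    rw [TopologicalSpace.le_def]
    intro U hU
    intro s q hsq hq
    have : U ∈ @nhds P t q := by letI := t; exact IsOpen.mem_nhds hU hq
    exact (ht s q hsq) this

/-- the index dichotomy -/
lemma index_dichotomy (n : ℕ → ℕ) :
    (∃ m, {k | n k = m}.Infinite) ∨ (∃ σ : ℕ → ℕ, StrictMono σ ∧ StrictMono (n ∘ σ)) := by
  by_cases h : ∃ m, {k | n k = m}.Infinite
  · exact Or.inl h
  · push_neg at h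
    right
    have hfin : ∀ M, {k | n k ≤ M}.Finite := by
      intro M
      have : {k | n k ≤ M} ⊆ ⋃ m ∈ Finset.range (M + 1), {k | n k = m} := by
        intro k hk
        simp only [Set.mem_iUnion, Finset.mem_range]
        exact ⟨n k, Nat.lt_succ_of_le hk, rfl⟩
      exact Set.Finite.subset (Set.Finite.biUnion (Finset.range (M+1)).finite_toSet
        (fun m _ => (h m))) this
    have key : ∀ K M : ℕ, ∃ k, K < k ∧ M < n k := by
      intro K M
      obtain ⟨B, hB⟩ := (hfin M).bddAbove
      refine ⟨max K B + 1, ?_, ?_⟩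
      · omega
      · by_contra hc
        have : max K B + 1 ∈ {k | n k ≤ M} := not_lt.mp hc
        have := hB this
        omega
    choose f hf1 hf2 using key
    let σ : ℕ → ℕ := fun k => Nat.rec 0 (fun _ prev => f prev (n prev)) k
    have hstep : ∀ k, σ k < σ (k + 1) ∧ n (σ k) < n (σ (k + 1)) := by
      intro k
      exact ⟨hf1 (σ k) (n (σ k)), hf2 (σ k) (n (σ k))⟩
    exact ⟨σ, strictMono_nat_of_lt_succ (fun k => (hstep k).1),
      strictMono_nat_of_lt_succ (fun k => (hstep k).2)⟩

end Main

/-- A sequence converges to `x` w.r.t. the sequential order topology iff every subsequence has a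
further subsequence order converging to `x`. -/
theorem stmt0 {P : Type*} [Preorder P] (x : ℕ → P) (l : P) :
    Filter.Tendsto x Filter.atTop (@nhds P (seqOrderTop P) l) ↔
      ∀ φ : ℕ → ℕ, StrictMono φ →
        ∃ ψ : ℕ → ℕ, StrictMono ψ ∧ SeqOrderConv (x ∘ φ ∘ ψ) l := by
  rw [seqOrderTop_eq]
  constructor
  · -- hard direction
    intro h φ hφ
    set a : ℕ → P := x ∘ φ with ha_def
    have ha : Filter.Tendsto a Filter.atTop (@nhds P (t0 P) l) :=
      h.comp hφ.tendsto_atTop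
    by_cases hinf : {n | a n ≤ l ∧ l ≤ a n}.Infinite
    · obtain ⟨ψ, hψ, hψ2⟩ := Filter.extraction_of_frequently_atTop
        (Nat.frequently_atTop_iff_infinite.mpr hinf)
      exact ⟨ψ, hψ, seqOrderConv_of_equiv (fun k => hψ2 k)⟩
    · rw [Set.not_infinite] at hinf
      obtain ⟨N0, hN0⟩ := hinf.bddAbove
      set N := N0 + 1 with hN_def
      have hN : ∀ n, N ≤ n → ¬(a n ≤ l ∧ l ≤ a n) := by
        intro n hn hcontra
        have := hN0 hcontra
        omega
      by_contra hcon
      push_neg at hcon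
      -- key facts: frequent upper bounds of a are ≥ l, frequent lower bounds ≤ l
      have key1 : ∀ b : P, {m | a m ≤ b}.Infinite → l ≤ b := by
        intro b hb
        by_contra hlb
        have hUopen : @IsOpen P (t0 P) {p : P | ¬ p ≤ b} := by
          show ∀ (s : ℕ → P) (q : P), SeqOrderConv s q → q ∈ {p : P | ¬ p ≤ b} → ∀ᶠ n in Filter.atTop, s n ∈ {p : P | ¬ p ≤ b}
          intro s q hsq hq
          by_contra hev
          rw [Filter.not_eventually] at hev
          obtain ⟨σ, hσ, hσb⟩ := Filter.extraction_of_frequently_atTop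
            (hev.mono (fun m hm => (not_not.mp (by simpa using hm) : s m ≤ b)))
          exact hq ((hsq.subseq hσ).le_of_forall_le hσb)
        have hmem : {p : P | ¬ p ≤ b} ∈ @nhds P (t0 P) l :=
          by letI := t0 P; exact IsOpen.mem_nhds hUopen hlb
        have hev := ha hmem
        obtain ⟨m, hm1, hm2⟩ :=
          ((Nat.frequently_atTop_iff_infinite.mpr hb).and_eventually hev).exists
        exact hm2 hm1
      have key2 : ∀ b : P, {m | b ≤ a m}.Infinite → b ≤ l := by
        intro b hb
        by_contra hlb
        have hUopen : @IsOpen P (t0 P) {p : P | ¬ b ≤ p} := by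
          show ∀ (s : ℕ → P) (q : P), SeqOrderConv s q → q ∈ {p : P | ¬ b ≤ p} → ∀ᶠ n in Filter.atTop, s n ∈ {p : P | ¬ b ≤ p}
          intro s q hsq hq
          by_contra hev
          rw [Filter.not_eventually] at hev
          obtain ⟨σ, hσ, hσb⟩ := Filter.extraction_of_frequently_atTop
            (hev.mono (fun m hm => (not_not.mp (by simpa using hm) : b ≤ s m)))
          exact hq ((hsq.subseq hσ).ge_of_forall_ge hσb)
        have hmem : {p : P | ¬ b ≤ p} ∈ @nhds P (t0 P) l :=
          by letI := t0 P; exact IsOpen.mem_nhds hUopen hlb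
        have hev := ha hmem
        obtain ⟨m, hm1, hm2⟩ :=
          ((Nat.frequently_atTop_iff_infinite.mpr hb).and_eventually hev).exists
        exact hm2 hm1
      -- the closed set of points equivalent to some tail term
      set F : Set P := {p | ∃ m, N ≤ m ∧ a m ≤ p ∧ p ≤ a m} with hF_def
      have hFclosed : SeqOC F := by
        intro s q hs hsq
        choose n hn1 hn2 hn3 using hs
        rcases index_dichotomy n with ⟨m, hm⟩ | ⟨σ, hσ, hnσ⟩
        · obtain ⟨σ, hσ, hσm⟩ := Filter.extraction_of_frequently_atTop
            (Nat.frequently_atTop_iff_infinite.mpr hm)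
          have hconv : SeqOrderConv (s ∘ σ) q := hsq.subseq hσ
          have hq1 : q ≤ a m := hconv.le_of_forall_le
            (fun k => by rw [← hσm k]; exact hn3 (σ k))
          have hq2 : a m ≤ q := hconv.ge_of_forall_ge
            (fun k => by rw [← hσm k]; exact hn2 (σ k))
          exact ⟨m, by rw [← hσm 0]; exact hn1 (σ 0), hq2, hq1⟩
        · exfalso
          have hconv : SeqOrderConv (a ∘ (n ∘ σ)) q :=
            (hsq.subseq hσ).between (fun k => ⟨hn3 (σ k), hn2 (σ k)⟩)
          obtain ⟨y, z, hy, hz, hyz, hLU, hGL⟩ := hconv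
          have hql : q ≤ l := by
            refine hLU.2 ?_
            rintro _ ⟨i, rfl⟩
            refine key2 (y i) ?_
            have hsub : (fun j => n (σ j)) '' (Set.Ici i) ⊆ {m | y i ≤ a m} := by
              rintro _ ⟨j, hj, rfl⟩
              exact le_trans (hy i j hj) (hyz j).1
            exact Set.Infinite.mono hsub
              ((Set.Ici_infinite i).image (hnσ.injective.injOn))
          have hlq : l ≤ q := by
            refine hGL.2 ?_
            rintro _ ⟨i, rfl⟩
            refine key1 (z i) ?_
            have hsub : (fun j => n (σ j)) '' (Set.Ici i) ⊆ {m | a m ≤ z i} := by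
              rintro _ ⟨j, hj, rfl⟩
              exact le_trans (hyz j).2 (hz i j hj)
            exact Set.Infinite.mono hsub
              ((Set.Ici_infinite i).image (hnσ.injective.injOn))
          have : SeqOrderConv (x ∘ φ ∘ (n ∘ σ)) l := by
            have h' : SeqOrderConv (a ∘ (n ∘ σ)) l :=
              SeqOrderConv.swap ⟨y, z, hy, hz, hyz, hLU, hGL⟩ hql hlq
            exact h'
          exact hcon (n ∘ σ) (hnσ) this
      have hlF : l ∉ F := by
        rintro ⟨m, hm1, hm2, hm3⟩
        exact hN m hm1 ⟨hm2, hm3⟩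
      have hmem : Fᶜ ∈ @nhds P (t0 P) l :=
        by letI := t0 P; exact IsOpen.mem_nhds (isOpen_t0_compl hFclosed) hlF
      have hev := ha hmem
      obtain ⟨m, hm1, hm2⟩ := ((Filter.eventually_ge_atTop N).and hev).exists
      exact hm2 ⟨m, hm1, le_refl _, le_refl _⟩
  · -- easy direction
    intro h
    rw [Filter.tendsto_def]
    intro U hU
    rw [@mem_nhds_iff P (t0 P) l U] at hU
    obtain ⟨V, hVU, hV, hlV⟩ := hU
    by_contra hev
    have hev' : ¬ ∀ᶠ n in Filter.atTop, x n ∈ V := by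
      intro hh
      exact hev (hh.mono (fun n hn => hVU hn))
    have hfreq : ∃ᶠ n in Filter.atTop, x n ∉ V := Filter.not_eventually.mp hev'
    obtain ⟨φ, hφ, hφV⟩ := Filter.extraction_of_frequently_atTop hfreq
    obtain ⟨ψ, hψ, hψconv⟩ := h φ hφ
    have := hV (x ∘ φ ∘ ψ) l hψconv hlV
    obtain ⟨k, hk⟩ := this.exists
    exact hφV (ψ k) hk
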